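/- arXiv:1102.2009 — 3 statements merged into one kernel-verified Lean document; each statement's English description precedes it below -/
import Mathlib

section
/- Under the hypotheses E₀ > 0, q₀ > 0, r₀ > 0, E₀ = ρ₀²/2 + q₀/r₀², the reparametrized time σ(t) = √(2q₀)·τ(t) with τ(t) = ∫₀ᵗ (2E₀s² + 2r₀ρ₀s + r₀²)^{-1} ds satisfies lim_{t→±∞} σ(t) = ±π/2 − arctan(r₀ρ₀/√(2q₀)); in particular σ(+∞) − σ(−∞) = π. -/
open Filter Real intervalIntegral
open scoped Topology

/-- The reparametrized time `σ(t) = √(2q₀) τ(t)`, with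
`τ(t) = ∫₀ᵗ (2E₀s² + 2r₀ρ₀s + r₀²)⁻¹ ds`, satisfies
`σ(t) → ±π/2 − arctan(r₀ρ₀/√(2q₀))` as `t → ±∞`; in particular
`σ(+∞) − σ(−∞) = π`. -/
theorem total_boundary_geodesic_time
    (E₀ q₀ r₀ ρ₀ : ℝ) (hE : 0 < E₀) (hq : 0 < q₀) (hr₀ : 0 < r₀)
    (henergy : E₀ = ρ₀ ^ 2 / 2 + q₀ / r₀ ^ 2)
    (σ : ℝ → ℝ)
    (hσ : σ = fun t => Real.sqrt (2 * q₀) *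
      ∫ s in (0:ℝ)..t, (2 * E₀ * s ^ 2 + 2 * r₀ * ρ₀ * s + r₀ ^ 2)⁻¹) :
    Tendsto σ atTop (𝓝 (π / 2 - Real.arctan (r₀ * ρ₀ / Real.sqrt (2 * q₀)))) ∧
    Tendsto σ atBot (𝓝 (-(π / 2) - Real.arctan (r₀ * ρ₀ / Real.sqrt (2 * q₀)))) ∧
    (π / 2 - Real.arctan (r₀ * ρ₀ / Real.sqrt (2 * q₀)))
      - (-(π / 2) - Real.arctan (r₀ * ρ₀ / Real.sqrt (2 * q₀))) = π := by
  set c := Real.sqrt (2 * q₀) with hc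
  have hc0 : 0 < c := Real.sqrt_pos.mpr (by linarith)
  have hc2 : c ^ 2 = 2 * q₀ := Real.sq_sqrt (by linarith)
  set Q : ℝ → ℝ := fun s => 2 * E₀ * s ^ 2 + 2 * r₀ * ρ₀ * s + r₀ ^ 2 with hQ
  -- key algebraic identity
  have hkey : ∀ s : ℝ, 2 * q₀ + (2 * E₀ * s + r₀ * ρ₀) ^ 2 = 2 * E₀ * Q s := by
    intro s
    have hr2 : r₀ ^ 2 ≠ 0 := by positivity
    have h2E : 2 * E₀ * r₀ ^ 2 = ρ₀ ^ 2 * r₀ ^ 2 + 2 * q₀ := by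
      field_simp at henergy ⊢; nlinarith [henergy]
    simp only [hQ]; nlinarith [h2E]
  have hQpos : ∀ s : ℝ, 0 < Q s := by
    intro s
    have := hkey s
    nlinarith [sq_nonneg (2 * E₀ * s + r₀ * ρ₀), hq, hE]
  set F : ℝ → ℝ := fun t => Real.arctan ((2 * E₀ * t + r₀ * ρ₀) / c) with hF
  have hFd : ∀ s : ℝ, HasDerivAt F (c * (Q s)⁻¹) s := by
    intro s
    have hg : HasDerivAt (fun t : ℝ => (2 * E₀ * t + r₀ * ρ₀) / c) (2 * E₀ / c) s := by
      simpa using (((hasDerivAt_id s).const_mul (2 * E₀)).add_const (r₀ * ρ₀)).div_const c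
    have := (Real.hasDerivAt_arctan ((2 * E₀ * s + r₀ * ρ₀) / c)).comp s hg
    refine this.congr_deriv ?_
    symm
    have h1 : 1 + ((2 * E₀ * s + r₀ * ρ₀) / c) ^ 2 = (2 * E₀ * Q s) / c ^ 2 := by
      field_simp
      nlinarith [hkey s, hc2]
    have hQs : (2 * E₀ * s ^ 2 + 2 * r₀ * ρ₀ * s + r₀ ^ 2) ≠ 0 := (hQpos s).ne'
    rw [h1]
    field_simp [hE.ne', hc0.ne', hQs]
  have hint : ∀ t : ℝ, IntervalIntegrable (fun s => c * (Q s)⁻¹) MeasureTheory.volume 0 t := by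
    intro t
    apply Continuous.intervalIntegrable
    exact continuous_const.mul ((by continuity : Continuous Q).inv₀ fun s => (hQpos s).ne')
  have hσF : σ = fun t => F t - F 0 := by
    funext t
    rw [hσ]
    have := intervalIntegral.integral_eq_sub_of_hasDerivAt (fun s _ => hFd s) (hint t)
    rw [intervalIntegral.integral_const_mul] at this
    simpa [hQ] using this
  have hF0 : F 0 = Real.arctan (r₀ * ρ₀ / c) := by simp [hF]
  -- limits
  have hlin_top : Tendsto (fun t : ℝ => (2 * E₀ * t + r₀ * ρ₀) / c) atTop atTop := by
    apply Tendsto.atTop_div_const hc0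
    exact tendsto_atTop_add_const_right _ _ (tendsto_id.const_mul_atTop (by linarith))
  have hlin_bot : Tendsto (fun t : ℝ => (2 * E₀ * t + r₀ * ρ₀) / c) atBot atBot := by
    apply Tendsto.atBot_div_const hc0
    exact tendsto_atBot_add_const_right _ _ (tendsto_id.const_mul_atBot (by linarith))
  have hFtop : Tendsto F atTop (𝓝 (π / 2)) :=
    (Real.tendsto_arctan_atTop.mono_right nhdsWithin_le_nhds).comp hlin_top
  have hFbot : Tendsto F atBot (𝓝 (-(π / 2))) :=
    (Real.tendsto_arctan_atBot.mono_right nhdsWithin_le_nhds).comp hlin_bot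
  refine ⟨?_, ?_, by ring⟩
  · rw [hσF, ← hF0]; exact hFtop.sub_const _
  · rw [hσF, ← hF0]; exact hFbot.sub_const _
end

section
/- Suppose g : ℝ → ℝ is differentiable, nonnegative, g(0) = 0, and satisfies |g'(t)| ≤ C⟨t⟩^{-1-μ} g(t) + C h^μ ⟨t⟩^{-1-μ} for all t ∈ ℝ, where C, μ > 0, h ∈ (0,1], and ⟨t⟩ = √(1+t²). Then there exists a constant C' depending only on C and μ (not on h or t) such that g(t) ≤ C' h^μ for all t ∈ ℝ. -/
open Real

private lemma weight_bound (μ : ℝ) (hμ : 0 < μ) (t : ℝ) (ht : 0 ≤ t) :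
    Real.sqrt (1 + t ^ 2) ^ (-(1 + μ)) ≤ (2:ℝ) ^ (1 + μ) * (1 + t) ^ (-(1 + μ)) := by
  have h1t : (0:ℝ) < 1 + t := by linarith
  have h2 : (0:ℝ) < (1 + t) / 2 := by positivity
  have hs : (1 + t) / 2 ≤ Real.sqrt (1 + t ^ 2) := by
    rw [show (1 + t) / 2 = Real.sqrt (((1 + t) / 2) ^ 2) from
      (Real.sqrt_sq (by positivity)).symm]
    apply Real.sqrt_le_sqrt
    nlinarith
  calc Real.sqrt (1 + t ^ 2) ^ (-(1 + μ)) ≤ ((1 + t) / 2) ^ (-(1 + μ)) :=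
        Real.rpow_le_rpow_of_nonpos h2 hs (by linarith)
    _ = (2:ℝ) ^ (1 + μ) * (1 + t) ^ (-(1 + μ)) := by
        rw [Real.div_rpow h1t.le (by norm_num), Real.rpow_neg (by norm_num : (0:ℝ) ≤ 2),
          Real.rpow_neg h1t.le]
        field_simp

private lemma gronwall_aux (C μ M : ℝ) (hC : 0 < C) (hμ : 0 < μ) (hM : 0 ≤ M)
    (g : ℝ → ℝ) (hg : Differentiable ℝ g) (hgn : ∀ t, 0 ≤ g t) (hg0 : g 0 = 0)
    (hb : ∀ t, 0 ≤ t → |deriv g t| ≤ C * (1 + t) ^ (-(1 + μ)) * (g t + M)) :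
    ∀ t, 0 ≤ t → g t ≤ M * Real.exp (C / μ) := by
  set P : ℝ → ℝ := fun t => (C / μ) * (1 - (1 + t) ^ (-μ)) with hP
  set F : ℝ → ℝ := fun t => (g t + M) * Real.exp (-P t) with hF
  have hPder : ∀ t : ℝ, 0 < 1 + t →
      HasDerivAt P (C * (1 + t) ^ (-(1 + μ))) t := by
    intro t h1t
    have h1 : HasDerivAt (fun t : ℝ => 1 + t) 1 t := (hasDerivAt_id t).const_add 1
    have h2 : HasDerivAt (fun t : ℝ => (1 + t) ^ (-μ)) (1 * (-μ) * (1 + t) ^ (-μ - 1)) t :=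
      h1.rpow_const (Or.inl h1t.ne')
    have h3 : HasDerivAt P ((C / μ) * (0 - 1 * (-μ) * (1 + t) ^ (-μ - 1))) t :=
      (((hasDerivAt_const t (1:ℝ)).sub h2)).const_mul (C / μ)
    convert h3 using 1
    have : -μ - 1 = -(1 + μ) := by ring
    rw [this]
    field_simp
    ring
  have hFder : ∀ t : ℝ, 0 < 1 + t →
      HasDerivAt F ((deriv g t - C * (1 + t) ^ (-(1 + μ)) * (g t + M)) * Real.exp (-P t)) t := by
    intro t h1t
    have hgd : HasDerivAt (fun t => g t + M) (deriv g t) t :=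
      ((hg t).hasDerivAt).add_const M
    have hed : HasDerivAt (fun t => Real.exp (-P t))
        (Real.exp (-P t) * (-(C * (1 + t) ^ (-(1 + μ))))) t :=
      (((hPder t h1t).neg)).exp
    have : HasDerivAt (fun y => (g y + M) * Real.exp (-P y))
        (deriv g t * Real.exp (-P t) + (g t + M) * (Real.exp (-P t) * (-(C * (1 + t) ^ (-(1 + μ)))))) t :=
      hgd.mul hed
    convert this using 1
    ring
  have hFanti : AntitoneOn F (Set.Ici 0) := by
    apply antitoneOn_of_deriv_nonpos (convex_Ici 0)
    · intro t ht
      exact ((hFder t (by simp only [Set.mem_Ici] at ht; linarith)).continuousAt).continuousWithinAt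
    · intro t ht
      rw [interior_Ici] at ht
      exact ((hFder t (by simp only [Set.mem_Ioi] at ht; linarith)).differentiableAt).differentiableWithinAt
    · intro t ht
      rw [interior_Ici] at ht
      simp only [Set.mem_Ioi] at ht
      rw [(hFder t (by linarith)).deriv]
      have hbd := hb t ht.le
      have h1 : deriv g t ≤ C * (1 + t) ^ (-(1 + μ)) * (g t + M) :=
        le_trans (le_abs_self _) hbd
      have h2 : (0:ℝ) < Real.exp (-P t) := Real.exp_pos _
      nlinarith
  intro t ht
  have hF0 : F 0 = M := by
    simp only [hF, hP, hg0, Real.one_rpow]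
    norm_num
  have hFt : F t ≤ M := by
    rw [← hF0]
    exact hFanti Set.self_mem_Ici ht ht
  have h1t : (0:ℝ) < 1 + t := by linarith
  have hPt : P t ≤ C / μ := by
    have h0 : (0:ℝ) ≤ (1 + t) ^ (-μ) := Real.rpow_nonneg h1t.le _
    have : 1 - (1 + t) ^ (-μ) ≤ 1 := by linarith
    calc P t ≤ (C / μ) * 1 := by
          apply mul_le_mul_of_nonneg_left this (by positivity)
      _ = C / μ := mul_one _
  have hexp : Real.exp (P t) ≤ Real.exp (C / μ) := Real.exp_le_exp.mpr hPt
  have hkey : g t + M ≤ M * Real.exp (P t) := by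
    have := mul_le_mul_of_nonneg_right hFt (Real.exp_pos (P t)).le
    rw [hF] at this
    simp only at this
    rw [mul_assoc, ← Real.exp_add] at this
    simpa using this
  have hMexp : M * Real.exp (P t) ≤ M * Real.exp (C / μ) :=
    mul_le_mul_of_nonneg_left hexp hM
  linarith [hgn t, hM]

/-- Gronwall-type estimate: if `g ≥ 0` is differentiable, `g(0) = 0` and
`|g'(t)| ≤ C⟨t⟩^{-1-μ} g(t) + C h^μ ⟨t⟩^{-1-μ}` with `⟨t⟩ = √(1+t²)`,
then `g(t) ≤ C' h^μ` for all `t`, with `C'` depending only on `C` and `μ`. -/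
theorem gronwall_uniform_bound (C μ : ℝ) (hC : 0 < C) (hμ : 0 < μ) :
    ∃ C' : ℝ, 0 < C' ∧
      ∀ h : ℝ, h ∈ Set.Ioc (0:ℝ) 1 →
        ∀ g : ℝ → ℝ, Differentiable ℝ g → (∀ t, 0 ≤ g t) → g 0 = 0 →
          (∀ t : ℝ, |deriv g t| ≤
            C * Real.sqrt (1 + t ^ 2) ^ (-(1 + μ)) * g t
              + C * h ^ μ * Real.sqrt (1 + t ^ 2) ^ (-(1 + μ))) →
          ∀ t : ℝ, g t ≤ C' * h ^ μ := by
  set K : ℝ := (2:ℝ) ^ (1 + μ) * C with hK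
  have hKpos : 0 < K := by positivity
  refine ⟨Real.exp (K / μ), Real.exp_pos _, ?_⟩
  rintro h ⟨hh0, hh1⟩ g hg hgn hg0 hb t
  have hM : (0:ℝ) ≤ h ^ μ := Real.rpow_nonneg hh0.le _
  -- convert the hypothesis to the form used by gronwall_aux, for a function f
  have key : ∀ f : ℝ → ℝ, Differentiable ℝ f → (∀ s, 0 ≤ f s) → f 0 = 0 →
      (∀ s : ℝ, |deriv f s| ≤
        C * Real.sqrt (1 + s ^ 2) ^ (-(1 + μ)) * f s
          + C * h ^ μ * Real.sqrt (1 + s ^ 2) ^ (-(1 + μ))) →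
      ∀ s, 0 ≤ s → f s ≤ Real.exp (K / μ) * h ^ μ := by
    intro f hf hfn hf0 hfb s hs
    have := gronwall_aux K μ (h ^ μ) hKpos hμ hM f hf hfn hf0 ?_ s hs
    · linarith [this]
    · intro u hu
      have hw := weight_bound μ hμ u hu
      have hwn : (0:ℝ) ≤ Real.sqrt (1 + u ^ 2) ^ (-(1 + μ)) :=
        Real.rpow_nonneg (Real.sqrt_nonneg _) _
      calc |deriv f u| ≤ C * Real.sqrt (1 + u ^ 2) ^ (-(1 + μ)) * f u
            + C * h ^ μ * Real.sqrt (1 + u ^ 2) ^ (-(1 + μ)) := hfb u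
        _ = C * Real.sqrt (1 + u ^ 2) ^ (-(1 + μ)) * (f u + h ^ μ) := by ring
        _ ≤ C * ((2:ℝ) ^ (1 + μ) * (1 + u) ^ (-(1 + μ))) * (f u + h ^ μ) := by
            apply mul_le_mul_of_nonneg_right _ (add_nonneg (hfn u) hM)
            exact mul_le_mul_of_nonneg_left hw hC.le
        _ = K * (1 + u) ^ (-(1 + μ)) * (f u + h ^ μ) := by rw [hK]; ring
  rcases le_or_gt 0 t with ht | ht
  · have := key g hg hgn hg0 hb t ht
    linarith
  · -- use the reflected function
    set f : ℝ → ℝ := fun s => g (-s) with hf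
    have hfd : Differentiable ℝ f := hg.comp differentiable_neg
    have hfder : ∀ s : ℝ, deriv f s = -deriv g (-s) := by
      intro s
      have : HasDerivAt f (deriv g (-s) * (-1)) s :=
        HasDerivAt.comp s ((hg (-s)).hasDerivAt) (hasDerivAt_neg s)
      rw [this.deriv]; ring
    have hfb : ∀ s : ℝ, |deriv f s| ≤
        C * Real.sqrt (1 + s ^ 2) ^ (-(1 + μ)) * f s
          + C * h ^ μ * Real.sqrt (1 + s ^ 2) ^ (-(1 + μ)) := by
      intro s
      rw [hfder s, abs_neg]
      have := hb (-s)
      simpa [neg_sq] using this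
    have := key f hfd (fun s => hgn (-s)) (by simp [hf, hg0]) hfb (-t) (by linarith)
    simp only [hf, neg_neg] at this
    linarith
end

section
/- Let r : [t₀,∞) → ℝ be twice differentiable with r(t₀) ≥ R > 0 and suppose (d²/dt²)(r(t)²) ≥ c > 0 whenever r(t) ≥ R, and (d/dt)(r(t)²)|_{t=t₀} ≥ 0. Then r(t)² ≥ R² + c(t−t₀)²/2 for all t ≥ t₀; in particular there exist c₁, c₂-type bounds c₁⟨t⟩ ≤ r(t) for t large. -/
lemma quad_lower_aux (f : ℝ → ℝ) (hfd : Differentiable ℝ f) (hfd' : Differentiable ℝ (deriv f))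
    {a b c : ℝ} (hstart : 0 ≤ deriv f a)
    (hconv : ∀ x ∈ Set.Ioo a b, c ≤ deriv (deriv f) x) :
    ∀ x ∈ Set.Icc a b, c * (x - a) ≤ deriv f x ∧ f a + c * (x - a) ^ 2 / 2 ≤ f x := by
  have hgderiv : ∀ s, HasDerivAt (fun s => deriv f s - c * (s - a)) (deriv (deriv f) s - c) s := by
    intro s
    have h1 : HasDerivAt (deriv f) (deriv (deriv f) s) s := (hfd' s).hasDerivAt
    have h2 : HasDerivAt (fun s => c * (s - a)) c s := by
      simpa using ((hasDerivAt_id s).sub_const a).const_mul c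
    exact h1.sub h2
  have hgmono : MonotoneOn (fun s => deriv f s - c * (s - a)) (Set.Icc a b) := by
    apply monotoneOn_of_deriv_nonneg (convex_Icc a b)
    · exact fun s _ => (hgderiv s).differentiableAt.continuousAt.continuousWithinAt
    · exact fun s _ => (hgderiv s).differentiableAt.differentiableWithinAt
    · intro s hs
      rw [interior_Icc] at hs
      rw [(hgderiv s).deriv]
      have := hconv s hs
      linarith
  intro x hx
  have hA : ∀ y ∈ Set.Icc a b, c * (y - a) ≤ deriv f y := by
    intro y hy
    have := hgmono (Set.left_mem_Icc.2 (hx.1.trans hx.2)) hy hy.1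
    simp only [sub_self, mul_zero, sub_zero] at this
    linarith
  refine ⟨hA x hx, ?_⟩
  have hhderiv : ∀ s, HasDerivAt (fun s => f s - c * (s - a) ^ 2 / 2) (deriv f s - c * (s - a)) s := by
    intro s
    have h1 : HasDerivAt f (deriv f s) s := (hfd s).hasDerivAt
    have h2 : HasDerivAt (fun s => c * (s - a) ^ 2 / 2) (c * (s - a)) s := by
      have h3 : HasDerivAt (fun s => (s - a) ^ 2) (2 * (s - a)) s := by
        have := ((hasDerivAt_id s).sub_const a).fun_pow 2
        simpa using this
      have h4 := h3.const_mul (c / 2)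
      have : (fun s => c / 2 * (s - a) ^ 2) = fun s => c * (s - a) ^ 2 / 2 := by
        funext s; ring
      rw [this] at h4
      rw [show c * (s - a) = c / 2 * (2 * (s - a)) by ring]; exact h4
    exact h1.sub h2
  have hhmono : MonotoneOn (fun s => f s - c * (s - a) ^ 2 / 2) (Set.Icc a b) := by
    apply monotoneOn_of_deriv_nonneg (convex_Icc a b)
    · exact fun s _ => (hhderiv s).differentiableAt.continuousAt.continuousWithinAt
    · exact fun s _ => (hhderiv s).differentiableAt.differentiableWithinAt
    · intro s hs
      rw [interior_Icc] at hs
      rw [(hhderiv s).deriv]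
      have := hA s (Set.Ioo_subset_Icc_self hs)
      linarith
  have := hhmono (Set.left_mem_Icc.2 (hx.1.trans hx.2)) hx hx.1
  simp only [sub_self] at this
  nlinarith [this]


/-- Virial-type convexity argument: if `r(t₀) ≥ R > 0`, `(r²)'(t₀) ≥ 0`, and
`(r²)'' ≥ c > 0` whenever `r ≥ R`, then `r(t)² ≥ R² + c(t−t₀)²/2` for `t ≥ t₀`;
in particular `r(t) ≥ c₁⟨t⟩` for large `t` and some `c₁ > 0`. -/
theorem virial_quadratic_growth
    (r : ℝ → ℝ) (hr : ContDiff ℝ 2 r)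
    (t₀ R c : ℝ) (hR : 0 < R) (hc : 0 < c)
    (hinit : R ≤ r t₀)
    (hconv : ∀ t, t₀ ≤ t → R ≤ r t → c ≤ deriv (deriv (fun s => (r s) ^ 2)) t)
    (hder0 : 0 ≤ deriv (fun s => (r s) ^ 2) t₀) :
    (∀ t, t₀ ≤ t → R ^ 2 + c * (t - t₀) ^ 2 / 2 ≤ (r t) ^ 2) ∧
    ∃ c₁ > (0:ℝ), ∃ T : ℝ, ∀ t, T ≤ t → c₁ * Real.sqrt (1 + t ^ 2) ≤ r t := by
  set f : ℝ → ℝ := fun s => (r s) ^ 2 with hfdef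
  have hfC : ContDiff ℝ 2 f := hr.pow 2
  have hfd : Differentiable ℝ f := hfC.differentiable (by norm_num)
  have hfC1 : ContDiff ℝ 1 (deriv f) := by
    have h2 : ContDiff ℝ (1 + 1) f := by
      have : ((2:ℕ∞) : WithTop ℕ∞) = 1 + 1 := by norm_num
      rw [← this]; exact_mod_cast hfC
    exact (contDiff_succ_iff_deriv.mp h2).2.2
  have hfd' : Differentiable ℝ (deriv f) := hfC1.differentiable one_ne_zero
  have hcont'' : Continuous (deriv (deriv f)) := hfC1.continuous_deriv le_rfl
  have hrc : Continuous r := hr.continuous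
  -- Step 1: r t ≥ R for all t ≥ t₀
  have hge : ∀ t, t₀ ≤ t → R ≤ r t := by
    by_contra hbad
    push_neg at hbad
    obtain ⟨t₁, ht₁, hrt₁⟩ := hbad
    set B : Set ℝ := {t | t₀ ≤ t ∧ r t < R} with hB
    have hBne : B.Nonempty := ⟨t₁, ht₁, hrt₁⟩
    have hBbdd : BddBelow B := ⟨t₀, fun x hx => hx.1⟩
    set τ := sInf B with hτ
    have hτ₀ : t₀ ≤ τ := le_csInf hBne (fun x hx => hx.1)
    have hbefore : ∀ s, t₀ ≤ s → s < τ → R ≤ r s := by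
      intro s hs hsτ
      by_contra h
      push_neg at h
      exact absurd (csInf_le hBbdd ⟨hs, h⟩) (not_le.2 hsτ)
    have hrτ_le : r τ ≤ R := by
      by_contra h
      push_neg at h
      have hmem : {s | R < r s} ∈ nhds τ := (isOpen_lt continuous_const hrc).mem_nhds h
      obtain ⟨ε, hε, hball⟩ := Metric.mem_nhds_iff.mp hmem
      have : τ + ε ≤ τ := by
        apply le_csInf hBne
        intro b hb
        by_contra hbε
        push_neg at hbε
        have hτb : τ ≤ b := csInf_le hBbdd hb
        have : b ∈ Metric.ball τ ε := by
          rw [Real.ball_eq_Ioo]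
          constructor <;> [linarith; linarith]
        exact absurd (hball this) (not_lt.2 hb.2.le)
      linarith
    have hrτ_ge : R ≤ r τ := by
      rcases eq_or_lt_of_le hτ₀ with h | h
      · rw [← h]; exact hinit
      · have hten : Filter.Tendsto r (nhdsWithin τ (Set.Iio τ)) (nhds (r τ)) :=
          (hrc.continuousAt).continuousWithinAt
        apply ge_of_tendsto hten
        filter_upwards [Ioo_mem_nhdsLT_of_mem (Set.mem_Ioc.mpr ⟨h, le_rfl⟩)] with s hs
        exact hbefore s hs.1.le hs.2
    have hIcc : ∀ s ∈ Set.Icc t₀ τ, R ≤ r s := by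
      intro s hs
      rcases eq_or_lt_of_le hs.2 with h | h
      · rw [h]; exact hrτ_ge
      · exact hbefore s hs.1 h
    -- deriv f τ ≥ 0
    have hderτ : 0 ≤ deriv f τ := by
      have := (quad_lower_aux f hfd hfd' hder0
        (fun x hx => hconv x hx.1.le (hIcc x (Set.Ioo_subset_Icc_self hx)))
        τ (Set.right_mem_Icc.2 hτ₀)).1
      nlinarith [this]
    -- local extension beyond τ
    have hτconv : c ≤ deriv (deriv f) τ := hconv τ hτ₀ hrτ_ge
    have hmem : {s | c / 2 < deriv (deriv f) s ∧ 0 < r s} ∈ nhds τ := by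
      apply Filter.inter_mem
      · exact (isOpen_lt continuous_const hcont'').mem_nhds (by simpa using by linarith)
      · exact (isOpen_lt continuous_const hrc).mem_nhds (by simp; linarith)
    obtain ⟨ε, hε, hball⟩ := Metric.mem_nhds_iff.mp hmem
    set b₁ := τ + ε / 2 with hb₁
    have hsub : Set.Icc τ b₁ ⊆ Metric.ball τ ε := by
      intro x hx
      rw [Real.ball_eq_Ioo]
      constructor
      · linarith [hx.1]
      · have := hx.2; simp only [hb₁] at this; linarith
    have hgood : ∀ x ∈ Set.Icc τ b₁, R ≤ r x := by
      intro x hx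
      have hq := (quad_lower_aux f hfd hfd' hderτ
        (fun y hy => (hball (hsub (Set.Ioo_subset_Icc_self hy))).1.le)
        x hx).2
      have hfτ : R ^ 2 ≤ f τ := by
        have : R ^ 2 ≤ r τ ^ 2 := by nlinarith
        simpa [hfdef] using this
      have hfx : R ^ 2 ≤ f x := by nlinarith [sq_nonneg (x - τ)]
      have hrx : 0 < r x := (hball (hsub hx)).2
      have hfxeq : f x = r x ^ 2 := rfl
      nlinarith [hfx]
    have : b₁ ≤ τ := by
      apply le_csInf hBne
      intro b hb
      by_contra hbb
      push_neg at hbb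
      have hτb : τ ≤ b := csInf_le hBbdd hb
      exact absurd (hgood b ⟨hτb, hbb.le⟩) (not_le.2 hb.2)
    simp only [hb₁] at this
    linarith
  -- Step 2: quadratic lower bound
  have hquad : ∀ t, t₀ ≤ t → R ^ 2 + c * (t - t₀) ^ 2 / 2 ≤ (r t) ^ 2 := by
    intro t ht
    have hq := (quad_lower_aux f hfd hfd' hder0
      (fun x hx => hconv x hx.1.le (hge x hx.1.le)) t (Set.right_mem_Icc.2 ht)).2
    have hfτ : R ^ 2 ≤ f t₀ := by
      have : f t₀ = r t₀ ^ 2 := rfl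
      nlinarith
    have : f t = r t ^ 2 := rfl
    nlinarith
  refine ⟨hquad, ?_⟩
  -- Step 3: linear growth
  refine ⟨min R (Real.sqrt (c / 8)), lt_min hR (Real.sqrt_pos.2 (by linarith)), max t₀ (2 * |t₀|), ?_⟩
  intro t ht
  set c₁ := min R (Real.sqrt (c / 8)) with hc₁def
  have hc₁pos : 0 < c₁ := lt_min hR (Real.sqrt_pos.2 (by linarith))
  have ht₀ : t₀ ≤ t := le_trans (le_max_left _ _) ht
  have htabs : 2 * |t₀| ≤ t := le_trans (le_max_right _ _) ht
  have htnn : 0 ≤ t := le_trans (by positivity) htabs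
  have hsq1 : c₁ ^ 2 ≤ R ^ 2 := by
    have := min_le_left R (Real.sqrt (c / 8))
    nlinarith [hc₁pos]
  have hsq2 : c₁ ^ 2 ≤ c / 8 := by
    have h1 := min_le_right R (Real.sqrt (c / 8))
    have h2 : Real.sqrt (c / 8) ^ 2 = c / 8 := Real.sq_sqrt (by linarith)
    nlinarith [hc₁pos, Real.sqrt_nonneg (c / 8)]
  have hdist : t ^ 2 / 4 ≤ (t - t₀) ^ 2 := by
    have h1 : t₀ ≤ |t₀| := le_abs_self t₀
    nlinarith
  have hkey : c₁ ^ 2 * (1 + t ^ 2) ≤ r t ^ 2 := by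
    have := hquad t ht₀
    nlinarith
  have hrt : 0 < r t := lt_of_lt_of_le hR (hge t ht₀)
  calc c₁ * Real.sqrt (1 + t ^ 2) = Real.sqrt (c₁ ^ 2 * (1 + t ^ 2)) := by
        rw [Real.sqrt_mul (sq_nonneg c₁), Real.sqrt_sq hc₁pos.le]
    _ ≤ Real.sqrt (r t ^ 2) := Real.sqrt_le_sqrt hkey
    _ = r t := Real.sqrt_sq hrt.le
end
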